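/- There exists a constant K > 0 such that for all ν > 0 and all z > 0, I_ν(z) ≤ K (z/2)^ν e^ν e^z / (ν + 1/2)^ν, where I_ν is the modified Bessel function of the first kind. -/

import Mathlib

open MeasureTheory Real Set Filter

noncomputable def besselI (ν z : ℝ) : ℝ :=
  (z / 2) ^ ν * ∑' k : ℕ, (z / 2) ^ (2 * k) / (k.factorial * Real.Gamma (ν + k + 1))

lemma aux_fact2 (k : ℕ) : (2 * k).factorial ≤ 4 ^ k * k.factorial ^ 2 := by
  induction k with
  | zero => simp
  | succ n ih =>
    have h : 2 * (n + 1) = (2 * n + 1) + 1 := by ring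
    rw [h, Nat.factorial_succ, Nat.factorial_succ]
    calc (2 * n + 1 + 1) * ((2 * n + 1) * (2 * n).factorial)
        ≤ (2 * n + 2) * ((2 * n + 2) * (2 * n).factorial) := by
          apply Nat.mul_le_mul_left
          apply Nat.mul_le_mul_right
          omega
      _ ≤ (2 * n + 2) * ((2 * n + 2) * (4 ^ n * n.factorial ^ 2)) := by
          apply Nat.mul_le_mul_left; apply Nat.mul_le_mul_left; exact ih
      _ = 4 ^ (n + 1) * ((n + 1) * n.factorial) ^ 2 := by ring

lemma aux_gammaFact {ν : ℝ} (hν : 0 < ν) (k : ℕ) :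
    (k.factorial : ℝ) * Real.Gamma (ν + 1) ≤ Real.Gamma (ν + k + 1) := by
  induction k with
  | zero => simp
  | succ n ih =>
    have hpos : (0 : ℝ) < ν + n + 1 := by positivity
    have h1 : Real.Gamma (ν + (n + 1 : ℕ) + 1) = (ν + n + 1) * Real.Gamma (ν + n + 1) := by
      have : ν + (n + 1 : ℕ) + 1 = (ν + n + 1) + 1 := by push_cast; ring
      rw [this, Real.Gamma_add_one hpos.ne']
    rw [h1]
    calc ((n + 1 : ℕ).factorial : ℝ) * Real.Gamma (ν + 1)
        = (n + 1) * ((n.factorial : ℝ) * Real.Gamma (ν + 1)) := by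
          rw [Nat.factorial_succ]; push_cast; ring
      _ ≤ (n + 1) * Real.Gamma (ν + n + 1) := by
          apply mul_le_mul_of_nonneg_left ih; positivity
      _ ≤ (ν + n + 1) * Real.Gamma (ν + n + 1) := by
          apply mul_le_mul_of_nonneg_right (by linarith)
          exact (Real.Gamma_pos_of_pos hpos).le

lemma aux_gammaLB {ν : ℝ} (hν : 0 < ν) :
    (ν + 1 / 2) ^ ν ≤ Real.exp (3 / 2) * Real.exp ν * Real.Gamma (ν + 1) := by
  have h1 : Real.Gamma (ν + 1) = ∫ x in Ioi (0:ℝ), Real.exp (-x) * x ^ ν := by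
    rw [Real.Gamma_eq_integral (by positivity)]; simp
  have hint : IntegrableOn (fun x : ℝ => Real.exp (-x) * x ^ ν) (Ioi 0) := by
    have := Real.GammaIntegral_convergent (s := ν + 1) (by positivity)
    simpa using this
  have hsub : Ioc (ν + 1/2) (ν + 3/2) ⊆ Ioi (0:ℝ) := by
    intro x hx; exact lt_trans (by linarith) hx.1
  have key : Real.exp (-(ν + 3/2)) * (ν + 1/2) ^ ν ≤ Real.Gamma (ν + 1) := by
    rw [h1]
    have step1 : ∫ x in Ioc (ν + 1/2) (ν + 3/2), Real.exp (-x) * x ^ ν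
        ≤ ∫ x in Ioi (0:ℝ), Real.exp (-x) * x ^ ν := by
      apply setIntegral_mono_set hint
      · filter_upwards [ae_restrict_mem measurableSet_Ioi] with x hx
        have : (0:ℝ) < x := hx
        positivity
      · exact Filter.Eventually.of_forall hsub
    refine le_trans ?_ step1
    have hmeas : MeasurableSet (Ioc (ν + 1/2) (ν + 3/2)) := measurableSet_Ioc
    have hvol : (volume (Ioc (ν + 1/2) (ν + 3/2))).toReal = 1 := by
      rw [Real.volume_Ioc]
      rw [ENNReal.toReal_ofReal (by linarith)]
      ring
    have := setIntegral_ge_of_const_le (c := Real.exp (-(ν + 3/2)) * (ν + 1/2) ^ ν)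
      hmeas (by rw [Real.volume_Ioc]; exact ENNReal.ofReal_ne_top)
      (fun x hx => by
        have hx1 : ν + 1/2 < x := hx.1
        have hx2 : x ≤ ν + 3/2 := hx.2
        have hb : (0:ℝ) < ν + 1/2 := by linarith
        apply mul_le_mul
        · exact Real.exp_le_exp.mpr (by linarith)
        · exact Real.rpow_le_rpow hb.le hx1.le hν.le
        · positivity
        · positivity)
      (hint.mono_set hsub)
    rw [measureReal_def, hvol, one_smul] at this
    exact this
  have hepos : (0:ℝ) < Real.exp (-(ν + 3/2)) := Real.exp_pos _
  have := mul_le_mul_of_nonneg_left key (le_of_lt (Real.exp_pos (ν + 3/2)))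
  rw [← mul_assoc, ← Real.exp_add] at this
  simp only [add_neg_cancel, Real.exp_zero, one_mul] at this
  calc (ν + 1/2) ^ ν ≤ Real.exp (ν + 3/2) * Real.Gamma (ν + 1) := this
    _ = Real.exp (3/2) * Real.exp ν * Real.Gamma (ν + 1) := by
        rw [← Real.exp_add]; ring_nf

lemma aux_expSum {z : ℝ} (hz : 0 ≤ z) :
    ∑' k : ℕ, z ^ (2 * k) / (2 * k).factorial ≤ Real.exp z := by
  have hsum : Summable (fun n : ℕ => z ^ n / n.factorial) :=
    Real.summable_pow_div_factorial z
  have hexp : Real.exp z = ∑' n : ℕ, z ^ n / n.factorial := by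
    rw [Real.exp_eq_exp_ℝ, NormedSpace.exp_eq_tsum_div]
  rw [hexp]
  exact tsum_comp_le_tsum_of_inj hsum (fun n => by positivity)
    (mul_right_injective₀ (two_ne_zero) : Function.Injective (fun k : ℕ => 2 * k))

lemma aux_sum2_summable {z : ℝ} : Summable (fun k : ℕ => z ^ (2 * k) / (2 * k).factorial) :=
  (Real.summable_pow_div_factorial z).comp_injective
    (mul_right_injective₀ (two_ne_zero) : Function.Injective (fun k : ℕ => 2 * k))

theorem stmt7 :
    ∃ K > (0:ℝ), ∀ ν z : ℝ, 0 < ν → 0 < z →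
      besselI ν z ≤ K * (z / 2) ^ ν * Real.exp ν * Real.exp z / (ν + 1 / 2) ^ ν := by
  refine ⟨Real.exp (3/2), Real.exp_pos _, fun ν z hν hz => ?_⟩
  have hG1 : (0:ℝ) < Real.Gamma (ν + 1) := Real.Gamma_pos_of_pos (by positivity)
  -- term bound
  have hterm : ∀ k : ℕ, (z / 2) ^ (2 * k) / (k.factorial * Real.Gamma (ν + k + 1))
      ≤ z ^ (2 * k) / (2 * k).factorial / Real.Gamma (ν + 1) := by
    intro k
    have hGk : (0:ℝ) < Real.Gamma (ν + k + 1) := Real.Gamma_pos_of_pos (by positivity)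
    have hnum : (z / 2) ^ (2 * k) = z ^ (2 * k) / 4 ^ k := by
      rw [div_pow]
      congr 1
      rw [pow_mul]; norm_num
    have hkey : ((2 * k).factorial : ℝ) * Real.Gamma (ν + 1)
        ≤ 4 ^ k * ((k.factorial : ℝ) * Real.Gamma (ν + k + 1)) := by
      have h2 : ((2 * k).factorial : ℝ) ≤ 4 ^ k * k.factorial ^ 2 := by
        exact_mod_cast aux_fact2 k
      calc ((2 * k).factorial : ℝ) * Real.Gamma (ν + 1)
          ≤ (4 ^ k * k.factorial ^ 2) * Real.Gamma (ν + 1) :=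
            mul_le_mul_of_nonneg_right h2 hG1.le
        _ = 4 ^ k * ((k.factorial : ℝ) * ((k.factorial : ℝ) * Real.Gamma (ν + 1))) := by ring
        _ ≤ 4 ^ k * ((k.factorial : ℝ) * Real.Gamma (ν + k + 1)) := by
            apply mul_le_mul_of_nonneg_left _ (by positivity)
            exact mul_le_mul_of_nonneg_left (aux_gammaFact hν k) (by positivity)
    rw [hnum, div_div, div_div]
    exact div_le_div_of_nonneg_left (by positivity) (by positivity) hkey
  have hgsum : Summable (fun k : ℕ => z ^ (2 * k) / (2 * k).factorial / Real.Gamma (ν + 1)) :=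
    aux_sum2_summable.div_const _
  have hfsum : Summable (fun k : ℕ => (z / 2) ^ (2 * k) / (k.factorial * Real.Gamma (ν + k + 1))) := by
    apply Summable.of_nonneg_of_le _ hterm hgsum
    intro k
    have hGk : (0:ℝ) < Real.Gamma (ν + k + 1) := Real.Gamma_pos_of_pos (by positivity)
    positivity
  have hS : ∑' k : ℕ, (z / 2) ^ (2 * k) / (k.factorial * Real.Gamma (ν + k + 1))
      ≤ Real.exp z / Real.Gamma (ν + 1) := by
    calc ∑' k : ℕ, (z / 2) ^ (2 * k) / (k.factorial * Real.Gamma (ν + k + 1))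
        ≤ ∑' k : ℕ, z ^ (2 * k) / (2 * k).factorial / Real.Gamma (ν + 1) :=
          Summable.tsum_le_tsum hterm hfsum hgsum
      _ = (∑' k : ℕ, z ^ (2 * k) / (2 * k).factorial) / Real.Gamma (ν + 1) := by
          rw [tsum_div_const]
      _ ≤ Real.exp z / Real.Gamma (ν + 1) := by
          gcongr
          exact aux_expSum hz.le
  -- final assembly
  have hzpow : (0:ℝ) < (z / 2) ^ ν := Real.rpow_pos_of_pos (by linarith) ν
  have hnpow : (0:ℝ) < (ν + 1/2) ^ ν := Real.rpow_pos_of_pos (by linarith) ν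
  have hGinv : 1 / Real.Gamma (ν + 1) ≤ Real.exp (3/2) * Real.exp ν / (ν + 1/2) ^ ν := by
    rw [div_le_div_iff₀ hG1 hnpow]
    have := aux_gammaLB hν
    linarith [this]
  calc besselI ν z
      ≤ (z / 2) ^ ν * (Real.exp z / Real.Gamma (ν + 1)) := by
        unfold besselI
        exact mul_le_mul_of_nonneg_left hS hzpow.le
    _ ≤ (z / 2) ^ ν * (Real.exp z * (Real.exp (3/2) * Real.exp ν / (ν + 1/2) ^ ν)) := by
        apply mul_le_mul_of_nonneg_left _ hzpow.le
        rw [div_eq_mul_one_div (Real.exp z)]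
        exact mul_le_mul_of_nonneg_left hGinv (Real.exp_pos z).le
    _ = Real.exp (3/2) * (z / 2) ^ ν * Real.exp ν * Real.exp z / (ν + 1/2) ^ ν := by
        field_simp
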